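/- In an extremally disconnected compact Hausdorff space (one where the closure of every open set is open), every G_δ-point is isolated. -/
import Mathlib

universe u

/-- In an extremally disconnected compact Hausdorff space, every `G_δ`-point is
isolated. -/
theorem isolated_of_Gdelta_of_extremallyDisconnected (K : Type u) [TopologicalSpace K]
    [CompactSpace K] [T2Space K] [ExtremallyDisconnected K]
    (x : K) (hx : IsGδ ({x} : Set K)) : IsOpen ({x} : Set K) := by
  by_contra hiso
  obtain ⟨U, Uopen, hU⟩ := isGδ_iff_eq_iInter_nat.1 hx
  have hxU : ∀ n, x ∈ U n := fun n => by
    have : x ∈ (⋂ n, U n) := hU ▸ rfl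
    exact Set.mem_iInter.1 this n
  -- key step: shrink a clopen neighborhood, removing at least one point
  have step : ∀ (C : Set K) (n : ℕ), IsClopen C → x ∈ C →
      ∃ C', IsClopen C' ∧ x ∈ C' ∧ C' ⊆ C ∧ C' ⊆ U n ∧ (C \ C').Nonempty := by
    intro C n hC hxC
    have hCne : C ≠ {x} := by
      rintro rfl; exact hiso hC.2
    obtain ⟨y, hyC, hyx⟩ : ∃ y ∈ C, y ≠ x := by
      by_contra h
      push_neg at h
      exact hCne (Set.eq_singleton_iff_unique_mem.2 ⟨hxC, h⟩)
    have hopen : IsOpen (C ∩ U n ∩ {y}ᶜ) :=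
      ((hC.2.inter (Uopen n)).inter (isOpen_compl_singleton))
    have hxmem : x ∈ C ∩ U n ∩ {y}ᶜ :=
      ⟨⟨hxC, hxU n⟩, fun h => hyx (by simpa using h.symm)⟩
    obtain ⟨C', hC', hxC', hsub⟩ := compact_exists_isClopen_in_isOpen hopen hxmem
    refine ⟨C', hC', hxC', fun z hz => (hsub hz).1.1, fun z hz => (hsub hz).1.2,
      ⟨y, hyC, fun hy => (hsub hy).2 rfl⟩⟩
  choose! F hF1 hF2 hF3 hF4 hF5 using step
  obtain ⟨C₀, hC₀, hxC₀, hC₀U⟩ := compact_exists_isClopen_in_isOpen (Uopen 0) (hxU 0)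
  set V : ℕ → Set K := fun n => Nat.rec C₀ (fun n Vn => F Vn (n + 1)) n with hV
  have hVind : ∀ n, IsClopen (V n) ∧ x ∈ V n ∧ V n ⊆ U n := by
    intro n
    induction n with
    | zero => exact ⟨hC₀, hxC₀, hC₀U⟩
    | succ n ih =>
      exact ⟨hF1 (V n) (n + 1) ih.1 ih.2.1, hF2 (V n) (n + 1) ih.1 ih.2.1,
        hF4 (V n) (n + 1) ih.1 ih.2.1⟩
  have hVclopen : ∀ n, IsClopen (V n) := fun n => (hVind n).1
  have hxV : ∀ n, x ∈ V n := fun n => (hVind n).2.1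
  have hVsucc : ∀ n, V (n + 1) ⊆ V n := fun n =>
    hF3 (V n) (n + 1) (hVclopen n) (hxV n)
  have hVne : ∀ n, (V n \ V (n + 1)).Nonempty := fun n =>
    hF5 (V n) (n + 1) (hVclopen n) (hxV n)
  have hVanti : Antitone V := antitone_nat_of_succ_le hVsucc
  -- compactness: each neighborhood of x contains some V n
  have key : ∀ W : Set K, IsOpen W → x ∈ W → ∃ n, V n ⊆ W := by
    intro W hW hxW
    apply exists_subset_nhds_of_compactSpace
      (fun m n => ⟨m ⊔ n, hVanti le_sup_left, hVanti le_sup_right⟩)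
      (fun n => (hVclopen n).1)
    intro z hz
    have hz' : z ∈ ⋂ n, U n := Set.mem_iInter.2 fun n =>
      (hVind n).2.2 (Set.mem_iInter.1 hz n)
    rw [← hU] at hz'
    rcases hz' with rfl
    exact hW.mem_nhds hxW
  -- the alternating unions
  set D : ℕ → Set K := fun n => V n \ V (n + 1) with hD
  have hDopen : ∀ n, IsOpen (D n) := fun n => (hVclopen n).2.sdiff (hVclopen (n + 1)).1
  have hDsub : ∀ n, D n ⊆ V n := fun n => Set.diff_subset
  have hDdisj : ∀ m n, m < n → Disjoint (D m) (D n) := by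
    intro m n hmn
    refine Set.disjoint_left.2 fun z hzm hzn => hzm.2 ?_
    exact hVanti hmn (hDsub n hzn)
  set A : Set K := ⋃ n, D (2 * n) with hA
  set B : Set K := ⋃ n, D (2 * n + 1) with hB
  have hAopen : IsOpen A := isOpen_iUnion fun n => hDopen (2 * n)
  have hBopen : IsOpen B := isOpen_iUnion fun n => hDopen (2 * n + 1)
  have hAB : Disjoint A B := by
    refine Set.disjoint_iUnion_left.2 fun m => Set.disjoint_iUnion_right.2 fun n => ?_
    rcases lt_trichotomy (2 * m) (2 * n + 1) with h | h | h
    · exact hDdisj _ _ h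
    · omega
    · exact (hDdisj _ _ h).symm
  have hclosA : x ∈ closure A := by
    rw [mem_closure_iff]
    intro W hW hxW
    obtain ⟨n, hn⟩ := key W hW hxW
    obtain ⟨z, hz⟩ := hVne (2 * n)
    exact ⟨z, hn (hVanti (show n ≤ 2 * n by omega) (hDsub (2*n) hz)), Set.mem_iUnion.2 ⟨n, hz⟩⟩
  have hclosB : x ∈ closure B := by
    rw [mem_closure_iff]
    intro W hW hxW
    obtain ⟨n, hn⟩ := key W hW hxW
    obtain ⟨z, hz⟩ := hVne (2 * n + 1)
    exact ⟨z, hn (hVanti (show n ≤ 2 * n + 1 by omega) (hDsub (2*n+1) hz)), Set.mem_iUnion.2 ⟨n, hz⟩⟩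
  exact Set.disjoint_left.1
    (ExtremallyDisconnected.disjoint_closure_of_disjoint_isOpen hAB hAopen hBopen)
    hclosA hclosB
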